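/- If a closed set A ⊆ ℝ^d is r-convex (i.e., A equals the intersection of complements of all open balls of radius r disjoint from A), then for every 0 < r* ≤ r, A is also r*-convex. -/

import Mathlib

/-- The `r`-convex hull of `A`: intersection of complements of all open balls
of radius `r` disjoint from `A`. -/
def rHull {d : ℕ} (r : ℝ) (A : Set (EuclideanSpace ℝ (Fin d))) :
    Set (EuclideanSpace ℝ (Fin d)) :=
  ⋂ x ∈ {x : EuclideanSpace ℝ (Fin d) | Metric.ball x r ∩ A = ∅}, (Metric.ball x r)ᶜ

/-- If a closed set `A ⊆ ℝ^d` is `r`-convex, then it is `r*`-convex for every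
`0 < r* ≤ r`. -/
theorem rconvex_of_smaller_radius {d : ℕ} {A : Set (EuclideanSpace ℝ (Fin d))}
    (hA : IsClosed A) {r : ℝ} (hr : 0 < r) (hconv : A = rHull r A)
    {r' : ℝ} (hr' : 0 < r') (hle : r' ≤ r) :
    A = rHull r' A := by
  apply Set.Subset.antisymm
  · intro a ha
    simp only [rHull, Set.mem_iInter, Set.mem_compl_iff, Set.mem_setOf_eq]
    intro c hc hmem
    exact absurd hc (Set.nonempty_iff_ne_empty.mp ⟨a, hmem, ha⟩)
  · intro x hx
    by_contra hxA
    rw [hconv] at hxA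
    simp only [rHull, Set.mem_iInter, Set.mem_compl_iff, Set.mem_setOf_eq] at hxA
    push_neg at hxA
    obtain ⟨y, hy, hxy⟩ := hxA
    set t : ℝ := r' / r with ht
    have ht0 : 0 ≤ t := div_nonneg hr'.le hr.le
    have ht1 : t ≤ 1 := div_le_one_of_le₀ hle hr.le
    set y' : EuclideanSpace ℝ (Fin d) := (1 - t) • x + t • y with hy'
    have hxy' : dist x y' < r' := by
      have h1 : x - y' = t • (x - y) := by rw [hy']; module
      rw [dist_eq_norm, h1, norm_smul, Real.norm_eq_abs, abs_of_nonneg ht0]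
      calc t * ‖x - y‖ < t * r := by
            apply mul_lt_mul_of_pos_left _ (div_pos hr' hr)
            rw [← dist_eq_norm]; exact hxy
        _ = r' := by rw [ht, div_mul_cancel₀ _ hr.ne']
    have hy'y : dist y' y ≤ r - r' := by
      have h1 : y' - y = (1 - t) • (x - y) := by rw [hy']; module
      rw [dist_eq_norm, h1, norm_smul, Real.norm_eq_abs, abs_of_nonneg (by linarith)]
      have hd : ‖x - y‖ ≤ r := by rw [← dist_eq_norm]; exact le_of_lt hxy
      have : (1 - t) * ‖x - y‖ ≤ (1 - t) * r :=
        mul_le_mul_of_nonneg_left hd (by linarith)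
      have htr : (1 - t) * r = r - r' := by rw [ht, sub_mul, div_mul_cancel₀ _ hr.ne', one_mul]
      linarith
    have hsub : Metric.ball y' r' ⊆ Metric.ball y r := by
      intro z hz
      rw [Metric.mem_ball] at hz ⊢
      calc dist z y ≤ dist z y' + dist y' y := dist_triangle _ _ _
        _ < r' + (r - r') := by linarith
        _ = r := by ring
    have hdisj : Metric.ball y' r' ∩ A = ∅ := by
      rw [Set.eq_empty_iff_forall_notMem] at hy ⊢
      exact fun z ⟨hz1, hz2⟩ => hy z ⟨hsub hz1, hz2⟩
    simp only [rHull, Set.mem_iInter, Set.mem_compl_iff, Set.mem_setOf_eq] at hx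
    exact hx y' hdisj hxy'
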